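/- Let q, t ∈ ℂ with 0 < |q| < 1 and 0 < |t| < 1, and let d₁, d₂, d₃, d₄, Q, Λ ∈ ℂ with Q, d₂, d₄ ≠ 0. For x ∈ ℂ define the convergent double infinite product (x; q,t)_∞ := ∏_{i,j ≥ 0} (1 − x q^{i} t^{j}), and assume 1 − w q^{i} t^{j} ≠ 0 for all i, j ≥ 0 for each w ∈ {tΛ, t d₁d₂d₃d₄ Λ/q, t d₂d₄ Λ/q, d₁d₃ Λ}. Define g(d₁,d₂,d₃,d₄,Λ) := (t d₂d₄ Λ/q; q,t)_∞ (d₁d₃ Λ; q,t)_∞ / ((tΛ; q,t)_∞ (t d₁d₂d₃d₄ Λ/q; q,t)_∞). Then g(d₁, d₂, d₃, d₄, Λ) · g(d₁, q/(tQd₂), d₃, qQ/d₄, d₂d₄Λ/q) = (Λ; q)_∞ · (q^{−1} d₁d₂d₃d₄ Λ; q)_∞, where (x;q)_∞ := ∏_{i ≥ 0}(1 − x q^{i}). -/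

import Mathlib

/-- The double infinite product `(x;q,t)_∞ = ∏_{i,j≥0} (1 - x q^i t^j)`. -/
noncomputable def dqtPochInf (q t x : ℂ) : ℂ :=
  ∏' p : ℕ × ℕ, (1 - x * q ^ p.1 * t ^ p.2)

/-- The infinite product `(x;q)_∞ = ∏_{i≥0} (1 - x q^i)`. -/
noncomputable def qPochInf (q x : ℂ) : ℂ :=
  ∏' i : ℕ, (1 - x * q ^ i)

/-- The gauge factor
`g = (t d₂d₄Λ/q;q,t)_∞ (d₁d₃Λ;q,t)_∞ / ((tΛ;q,t)_∞ (t d₁d₂d₃d₄Λ/q;q,t)_∞)`. -/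
noncomputable def gFac (q t d₁ d₂ d₃ d₄ Λ : ℂ) : ℂ :=
  dqtPochInf q t (t * d₂ * d₄ * Λ / q) * dqtPochInf q t (d₁ * d₃ * Λ) /
    (dqtPochInf q t (t * Λ) * dqtPochInf q t (t * d₁ * d₂ * d₃ * d₄ * Λ / q))

open Complex

private lemma summable_geom_c {q : ℂ} (hq : ‖q‖ < 1) (x : ℂ) :
    Summable fun i : ℕ => x * q ^ i := by
  exact (summable_geometric_of_norm_lt_one (by exact hq)).mul_left x

private lemma summable_double {q t : ℂ} (hq : ‖q‖ < 1)
    (ht : ‖t‖ < 1) (x : ℂ) :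
    Summable fun p : ℕ × ℕ => x * q ^ p.1 * t ^ p.2 := by
  have h1 : Summable fun i : ℕ => ‖x * q ^ i‖ := by
    simp only [norm_mul, norm_pow]
    exact (summable_geometric_of_norm_lt_one (x := ‖q‖) (by rwa [norm_norm])).mul_left _
  have h2 : Summable fun j : ℕ => ‖t ^ j‖ := by
    simp only [norm_pow]
    exact summable_geometric_of_norm_lt_one (x := ‖t‖) (by rwa [norm_norm])
  have h3 := summable_mul_of_summable_norm h1 h2
  exact h3

private lemma dqt_eq_exp {q t : ℂ} (hq : ‖q‖ < 1) (ht : ‖t‖ < 1)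
    {x : ℂ} (hx : ∀ i j : ℕ, 1 - x * q ^ i * t ^ j ≠ 0) :
    dqtPochInf q t x
      = Complex.exp (∑' p : ℕ × ℕ, Complex.log (1 - x * q ^ p.1 * t ^ p.2)) := by
  have hs := (summable_double hq ht x).clog_one_sub
  have h := hs.hasSum.cexp
  have he : (Complex.exp ∘ fun p : ℕ × ℕ => Complex.log (1 - x * q ^ p.1 * t ^ p.2))
      = fun p : ℕ × ℕ => 1 - x * q ^ p.1 * t ^ p.2 :=
    funext fun p => Complex.exp_log (hx p.1 p.2)
  rw [he] at h
  exact h.tprod_eq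

private lemma qpoch_eq_exp {q : ℂ} (hq : ‖q‖ < 1)
    {x : ℂ} (hx : ∀ i : ℕ, 1 - x * q ^ i ≠ 0) :
    qPochInf q x = Complex.exp (∑' i : ℕ, Complex.log (1 - x * q ^ i)) := by
  have hs := (summable_geom_c hq x).clog_one_sub
  have h := hs.hasSum.cexp
  have he : (Complex.exp ∘ fun i : ℕ => Complex.log (1 - x * q ^ i))
      = fun i : ℕ => 1 - x * q ^ i :=
    funext fun i => Complex.exp_log (hx i)
  rw [he] at h
  exact h.tprod_eq

private lemma tprod_eq_zero' {ι : Type*} {f : ι → ℂ} (i₀ : ι) (h : f i₀ = 0) :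
    ∏' i, f i = 0 := by
  classical
  have hp : HasProd f 0 := by
    rw [HasProd]
    apply Filter.Tendsto.congr' _ tendsto_const_nhds
    filter_upwards [Filter.eventually_ge_atTop ({i₀} : Finset ι)] with s hs
    exact (Finset.prod_eq_zero (hs (Finset.mem_singleton_self i₀)) h).symm
  exact hp.tprod_eq

private lemma tsum_split {q t : ℂ} (hq : ‖q‖ < 1) (ht : ‖t‖ < 1)
    (x : ℂ) :
    ∑' p : ℕ × ℕ, Complex.log (1 - x * q ^ p.1 * t ^ p.2)
      = (∑' i : ℕ, Complex.log (1 - x * q ^ i))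
        + ∑' p : ℕ × ℕ, Complex.log (1 - (t * x) * q ^ p.1 * t ^ p.2) := by
  have hs := (summable_double hq ht x).clog_one_sub
  have hs' := (summable_double hq ht (t * x)).clog_one_sub
  rw [Summable.tsum_prod hs, Summable.tsum_prod hs',
    ← Summable.tsum_add ((summable_geom_c hq x).clog_one_sub) hs'.prod]
  apply tsum_congr
  intro i
  rw [Summable.tsum_eq_zero_add (hs.prod_factor i)]
  congr 1
  · norm_num
  · apply tsum_congr
    intro j
    congr 1
    ring

private lemma shift {q t : ℂ} (hq : ‖q‖ < 1) (ht : ‖t‖ < 1)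
    {x : ℂ} (hx : ∀ i j : ℕ, 1 - (t * x) * q ^ i * t ^ j ≠ 0) :
    dqtPochInf q t x = qPochInf q x * dqtPochInf q t (t * x) := by
  by_cases h0 : ∀ i : ℕ, 1 - x * q ^ i ≠ 0
  · have hall : ∀ i j : ℕ, 1 - x * q ^ i * t ^ j ≠ 0 := by
      intro i j
      cases j with
      | zero => simpa using h0 i
      | succ k =>
          have he : (1 : ℂ) - x * q ^ i * t ^ (k + 1) = 1 - (t * x) * q ^ i * t ^ k := by
            ring
          rw [he]; exact hx i k
    rw [dqt_eq_exp hq ht hall, dqt_eq_exp hq ht hx, qpoch_eq_exp hq h0,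
      ← Complex.exp_add, tsum_split hq ht x]
  · push_neg at h0
    obtain ⟨i, hi⟩ := h0
    have hz1 : qPochInf q x = 0 := tprod_eq_zero' i hi
    have hz2 : dqtPochInf q t x = 0 := tprod_eq_zero' ((i, 0) : ℕ × ℕ) (by simpa using hi)
    rw [hz1, hz2, zero_mul]

/-- Appendix H: the identity `g · T(g) = (Λ;q)_∞ (q⁻¹d₁d₂d₃d₄Λ;q)_∞`,
where `T` is the substitution `d₂ ↦ q/(tQd₂)`, `d₄ ↦ qQ/d₄`, `Λ ↦ d₂d₄Λ/q`
(with `d₁, d₃` fixed), used to recast Shakirov's equation as a coupled system. -/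
theorem statement17 (q t d₁ d₂ d₃ d₄ Q Λ : ℂ)
    (hq0 : 0 < ‖q‖) (hq1 : ‖q‖ < 1)
    (ht0 : 0 < ‖t‖) (ht1 : ‖t‖ < 1)
    (hQ : Q ≠ 0) (hd₂ : d₂ ≠ 0) (hd₄ : d₄ ≠ 0)
    (h₁ : ∀ i j : ℕ, 1 - (t * Λ) * q ^ i * t ^ j ≠ 0)
    (h₂ : ∀ i j : ℕ, 1 - (t * d₁ * d₂ * d₃ * d₄ * Λ / q) * q ^ i * t ^ j ≠ 0)
    (h₃ : ∀ i j : ℕ, 1 - (t * d₂ * d₄ * Λ / q) * q ^ i * t ^ j ≠ 0)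
    (h₄ : ∀ i j : ℕ, 1 - (d₁ * d₃ * Λ) * q ^ i * t ^ j ≠ 0) :
    gFac q t d₁ d₂ d₃ d₄ Λ *
        gFac q t d₁ (q / (t * Q * d₂)) d₃ (q * Q / d₄) (d₂ * d₄ * Λ / q) =
      qPochInf q Λ * qPochInf q (q⁻¹ * d₁ * d₂ * d₃ * d₄ * Λ) := by
  have hq : q ≠ 0 := by simpa using hq0.ne'
  have ht : t ≠ 0 := by simpa using ht0.ne'
  -- simplified substituted arguments
  have e1 : t * (q / (t * Q * d₂)) * (q * Q / d₄) * (d₂ * d₄ * Λ / q) / q = Λ := by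
    have h : t * (q / (t * Q * d₂)) * (q * Q / d₄) * (d₂ * d₄ * Λ / q) / q
        = (t * t⁻¹) * (Q * Q⁻¹) * (d₂ * d₂⁻¹) * (d₄ * d₄⁻¹) * (q * q⁻¹) * (q * q⁻¹) * Λ := by
      simp only [div_eq_mul_inv, mul_inv]; ring
    rw [h, mul_inv_cancel₀ ht, mul_inv_cancel₀ hQ, mul_inv_cancel₀ hd₂,
      mul_inv_cancel₀ hd₄, mul_inv_cancel₀ hq]
    ring
  have e2 : d₁ * d₃ * (d₂ * d₄ * Λ / q) = q⁻¹ * d₁ * d₂ * d₃ * d₄ * Λ := by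
    rw [div_eq_mul_inv]; ring
  have e3 : t * (d₂ * d₄ * Λ / q) = t * d₂ * d₄ * Λ / q := by ring
  have e4 : t * d₁ * (q / (t * Q * d₂)) * d₃ * (q * Q / d₄) * (d₂ * d₄ * Λ / q) / q
      = d₁ * d₃ * Λ := by
    have h : t * d₁ * (q / (t * Q * d₂)) * d₃ * (q * Q / d₄) * (d₂ * d₄ * Λ / q) / q
        = (t * t⁻¹) * (Q * Q⁻¹) * (d₂ * d₂⁻¹) * (d₄ * d₄⁻¹) * (q * q⁻¹) * (q * q⁻¹)
            * (d₁ * d₃ * Λ) := by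
      simp only [div_eq_mul_inv, mul_inv]; ring
    rw [h, mul_inv_cancel₀ ht, mul_inv_cancel₀ hQ, mul_inv_cancel₀ hd₂,
      mul_inv_cancel₀ hd₄, mul_inv_cancel₀ hq]
    ring
  have e5 : t * (q⁻¹ * d₁ * d₂ * d₃ * d₄ * Λ) = t * d₁ * d₂ * d₃ * d₄ * Λ / q := by
    rw [div_eq_mul_inv]; ring
  -- the four basic (nonvanishing) double products
  have hA : dqtPochInf q t (t * d₂ * d₄ * Λ / q) ≠ 0 := by
    rw [dqt_eq_exp hq1 ht1 h₃]; exact Complex.exp_ne_zero _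
  have hB : dqtPochInf q t (d₁ * d₃ * Λ) ≠ 0 := by
    rw [dqt_eq_exp hq1 ht1 h₄]; exact Complex.exp_ne_zero _
  have hC : dqtPochInf q t (t * Λ) ≠ 0 := by
    rw [dqt_eq_exp hq1 ht1 h₁]; exact Complex.exp_ne_zero _
  have hD : dqtPochInf q t (t * d₁ * d₂ * d₃ * d₄ * Λ / q) ≠ 0 := by
    rw [dqt_eq_exp hq1 ht1 h₂]; exact Complex.exp_ne_zero _
  -- shift identities
  have sE : dqtPochInf q t Λ = qPochInf q Λ * dqtPochInf q t (t * Λ) :=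
    shift hq1 ht1 h₁
  have sF : dqtPochInf q t (q⁻¹ * d₁ * d₂ * d₃ * d₄ * Λ)
      = qPochInf q (q⁻¹ * d₁ * d₂ * d₃ * d₄ * Λ)
        * dqtPochInf q t (t * d₁ * d₂ * d₃ * d₄ * Λ / q) := by
    have hx : ∀ i j : ℕ,
        1 - (t * (q⁻¹ * d₁ * d₂ * d₃ * d₄ * Λ)) * q ^ i * t ^ j ≠ 0 := by
      intro i j; rw [e5]; exact h₂ i j
    have := shift hq1 ht1 hx
    rwa [e5] at this
  unfold gFac
  rw [e1, e2, e3, e4, sE, sF]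
  set A := dqtPochInf q t (t * d₂ * d₄ * Λ / q) with hAdef
  set B := dqtPochInf q t (d₁ * d₃ * Λ) with hBdef
  set C := dqtPochInf q t (t * Λ) with hCdef
  set D := dqtPochInf q t (t * d₁ * d₂ * d₃ * d₄ * Λ / q) with hDdef
  set P₁ := qPochInf q Λ with hP1def
  set P₂ := qPochInf q (q⁻¹ * d₁ * d₂ * d₃ * d₄ * Λ) with hP2def
  have h : A * B / (C * D) * (P₁ * C * (P₂ * D) / (A * B))
      = P₁ * P₂ * ((A * B) * (A * B)⁻¹) * ((C * D) * (C * D)⁻¹) := by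
    simp only [div_eq_mul_inv]; ring
  rw [h, mul_inv_cancel₀ (mul_ne_zero hA hB), mul_inv_cancel₀ (mul_ne_zero hC hD)]
  ring
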